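/- Let 0 < α ≤ 1 and let λ ∈ ℂ with λ ≠ 0. If the functional equation E_α(λ x^α) · E_α(λ y^α) = E_α(λ (x+y)^α) holds for all real x, y ≥ 0, then α = 1. -/

import Mathlib

open Filter Topology

private lemma gamma_half_le {y : ℝ} (hy : 1 ≤ y) : (1/2 : ℝ) ≤ Real.Gamma y := by
  rcases le_or_gt 2 y with h2 | h2
  · have h1 : Real.Gamma 2 ≤ Real.Gamma y :=
      Real.Gamma_strictMonoOn_Ici.monotoneOn (by norm_num) h2 h2
    rw [Real.Gamma_two] at h1; linarith
  · have hy0 : y ≠ 0 := by linarith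
    have key : Real.Gamma (y + 1) = y * Real.Gamma y := Real.Gamma_add_one hy0
    have h1 : Real.Gamma 2 ≤ Real.Gamma (y + 1) :=
      Real.Gamma_strictMonoOn_Ici.monotoneOn (by norm_num) (by simp; linarith) (by linarith)
    rw [Real.Gamma_two, key] at h1
    nlinarith [Real.Gamma_pos_of_pos (show (0:ℝ) < y by linarith)]

private lemma key_bound (α : ℝ) (hα0 : 0 < α) (hα1 : α ≤ 1) (lam : ℂ) (t : ℝ) (ht : 0 ≤ t)
    (hsmall : ‖lam‖ * t ≤ 1/2) :
    ‖(∑' k : ℕ, (lam * (t:ℂ)) ^ k / ((Real.Gamma (1 + k * α) : ℝ) : ℂ)) - 1 -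
      (lam / ((Real.Gamma (1 + α) : ℝ) : ℂ)) * t‖ ≤ 4 * ‖lam‖^2 * t^2 := by
  set r : ℝ := ‖lam‖ * t with hr
  have hr0 : 0 ≤ r := mul_nonneg (norm_nonneg _) ht
  have hr1 : r < 1 := lt_of_le_of_lt hsmall (by norm_num)
  have hΓ : ∀ k : ℕ, (1/2 : ℝ) ≤ Real.Gamma (1 + k * α) := by
    intro k
    have hk : (0:ℝ) ≤ (k:ℝ) := Nat.cast_nonneg k
    exact gamma_half_le (by nlinarith)
  set f : ℕ → ℂ := fun k => (lam * (t:ℂ)) ^ k / ((Real.Gamma (1 + k * α) : ℝ) : ℂ) with hf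
  have hnormw : ‖lam * (t:ℂ)‖ = r := by
    rw [norm_mul, Complex.norm_real, Real.norm_of_nonneg ht]
  have hfb : ∀ k, ‖f k‖ ≤ 2 * r ^ k := by
    intro k
    have hΓk := hΓ k
    have hΓpos : (0:ℝ) < Real.Gamma (1 + k * α) := by linarith
    rw [hf, norm_div, norm_pow, hnormw, Complex.norm_real,
      Real.norm_of_nonneg hΓpos.le]
    rw [div_le_iff₀ hΓpos]
    calc r ^ k = 2 * r ^ k * (1/2 : ℝ) := by ring
    _ ≤ 2 * r ^ k * Real.Gamma (1 + k * α) := by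
        apply mul_le_mul_of_nonneg_left hΓk; positivity
  have hgeo : Summable (fun k : ℕ => 2 * r ^ k) :=
    (summable_geometric_of_lt_one hr0 hr1).mul_left 2
  have hsum : Summable f := Summable.of_norm_bounded hgeo hfb
  have hsplit := hsum.sum_add_tsum_nat_add 2
  have hf0 : f 0 = 1 := by
    simp [hf, Real.Gamma_one]
  have hf1 : f 1 = (lam / ((Real.Gamma (1 + α) : ℝ) : ℂ)) * t := by
    simp only [hf, pow_one, Nat.cast_one, one_mul]
    ring
  have hmain : (∑' k : ℕ, f k) - 1 - (lam / ((Real.Gamma (1 + α) : ℝ) : ℂ)) * t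
      = ∑' k : ℕ, f (k + 2) := by
    rw [← hsplit]
    rw [Finset.sum_range_succ, Finset.sum_range_one, hf0, hf1]
    ring
  rw [hmain]
  have hsum2 : Summable (fun k : ℕ => f (k + 2)) := by
    exact (summable_nat_add_iff 2).mpr hsum
  have hgeo2 : Summable (fun k : ℕ => 2 * r ^ 2 * r ^ k) :=
    (summable_geometric_of_lt_one hr0 hr1).mul_left _
  calc ‖∑' k : ℕ, f (k + 2)‖ ≤ 2 * r ^ 2 * (1 - r)⁻¹ := by
        apply tsum_of_norm_bounded ((hasSum_geometric_of_lt_one hr0 hr1).mul_left (2 * r ^ 2))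
        intro k
        calc ‖f (k + 2)‖ ≤ 2 * r ^ (k + 2) := hfb (k + 2)
        _ = 2 * r ^ 2 * r ^ k := by ring
  _ ≤ 4 * ‖lam‖^2 * t^2 := by
        have h1 : (1 - r)⁻¹ ≤ 2 := by
          rw [inv_le_comm₀ (by linarith) (by norm_num)]
          linarith
        have h2 : 2 * r ^ 2 * (1 - r)⁻¹ ≤ 2 * r ^ 2 * 2 := by
          apply mul_le_mul_of_nonneg_left h1; positivity
        calc 2 * r ^ 2 * (1 - r)⁻¹ ≤ 2 * r ^ 2 * 2 := h2
        _ = 4 * ‖lam‖^2 * t^2 := by rw [hr]; ring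

/-- If `0 < α ≤ 1`, `λ ≠ 0`, and `E_α(λ x^α) E_α(λ y^α) = E_α(λ (x+y)^α)` for all
`x, y ≥ 0`, then `α = 1`. -/
theorem functional_equation_forces_alpha_eq_one (α : ℝ) (hα0 : 0 < α) (hα1 : α ≤ 1)
    (lam : ℂ) (hlam : lam ≠ 0)
    (h : ∀ x y : ℝ, 0 ≤ x → 0 ≤ y →
      (∑' k : ℕ, (lam * ((x ^ α : ℝ) : ℂ)) ^ k / Complex.Gamma ((1 + k * α : ℝ) : ℂ)) *
        (∑' k : ℕ, (lam * ((y ^ α : ℝ) : ℂ)) ^ k / Complex.Gamma ((1 + k * α : ℝ) : ℂ)) =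
      ∑' k : ℕ, (lam * (((x + y) ^ α : ℝ) : ℂ)) ^ k /
        Complex.Gamma ((1 + k * α : ℝ) : ℂ)) :
    α = 1 := by
  simp only [Complex.Gamma_ofReal] at h
  set E : ℝ → ℂ := fun t => ∑' k : ℕ, (lam * (t:ℂ)) ^ k / ((Real.Gamma (1 + k * α) : ℝ) : ℂ)
    with hE
  set c : ℝ := (2:ℝ) ^ α with hc
  have hcpos : 0 < c := Real.rpow_pos_of_pos two_pos α
  set a : ℂ := lam / ((Real.Gamma (1 + α) : ℝ) : ℂ) with ha
  have hΓα : Real.Gamma (1 + α) ≠ 0 := (Real.Gamma_pos_of_pos (by linarith)).ne'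
  have hane : a ≠ 0 := div_ne_zero hlam (by exact_mod_cast hΓα)
  -- functional equation in terms of E
  have hfe : ∀ t : ℝ, 0 < t → E t * E t = E (c * t) := by
    intro t ht
    set x : ℝ := t ^ α⁻¹ with hx
    have hx0 : 0 ≤ x := Real.rpow_nonneg ht.le _
    have hxα : x ^ α = t := Real.rpow_inv_rpow ht.le hα0.ne'
    have hxx : (x + x) ^ α = c * t := by
      rw [← two_mul, Real.mul_rpow (by norm_num) hx0, hxα, hc]
    have := h x x hx0 hx0
    rw [hxα, hxx] at this
    exact this
  -- eventual smallness
  have hδpos : 0 < (1 / (2 * (‖lam‖ + 1)) : ℝ) := by positivity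
  have hev : ∀ᶠ t : ℝ in 𝓝[>] (0:ℝ), 0 < t ∧ ‖lam‖ * t ≤ 1/2 := by
    filter_upwards [Ioo_mem_nhdsGT hδpos, self_mem_nhdsWithin] with t htI ht
    refine ⟨ht, ?_⟩
    have h1 : t ≤ 1 / (2 * (‖lam‖ + 1)) := le_of_lt htI.2
    have h2 : ‖lam‖ * t ≤ ‖lam‖ * (1 / (2 * (‖lam‖ + 1))) :=
      mul_le_mul_of_nonneg_left h1 (norm_nonneg _)
    have h3 : ‖lam‖ * (1 / (2 * (‖lam‖ + 1))) ≤ 1/2 := by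
      rw [mul_one_div, div_le_div_iff₀ (by positivity) (by norm_num : (0:ℝ) < 2)]
      nlinarith [norm_nonneg lam]
    calc ‖lam‖ * t ≤ _ := h2
    _ ≤ 1/2 := h3
  -- key limit L2
  have L2 : Tendsto (fun t : ℝ => (E t - 1) / (t:ℂ)) (𝓝[>] (0:ℝ)) (𝓝 a) := by
    have htend : Tendsto (fun t : ℝ => 4 * ‖lam‖^2 * t) (𝓝[>] (0:ℝ)) (𝓝 0) := by
      have : Tendsto (fun t : ℝ => 4 * ‖lam‖^2 * t) (𝓝 (0:ℝ)) (𝓝 (4 * ‖lam‖^2 * 0)) :=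
        (continuous_const.mul continuous_id).tendsto 0
      simpa using this.mono_left nhdsWithin_le_nhds
    have hsq : Tendsto (fun t : ℝ => (E t - 1) / (t:ℂ) - a) (𝓝[>] (0:ℝ)) (𝓝 0) := by
      refine squeeze_zero_norm' ?_ htend
      · filter_upwards [hev] with t ht
        obtain ⟨ht0, hts⟩ := ht
        have htne : (t:ℂ) ≠ 0 := by exact_mod_cast ht0.ne'
        have key := key_bound α hα0 hα1 lam t ht0.le hts
        have heq : (E t - 1) / (t:ℂ) - a = (E t - 1 - a * t) / t := by
          field_simp
        rw [heq, norm_div, Complex.norm_real, Real.norm_of_nonneg ht0.le,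
          div_le_iff₀ ht0]
        calc ‖E t - 1 - a * t‖ ≤ 4 * ‖lam‖^2 * t^2 := key
        _ = 4 * ‖lam‖^2 * t * t := by ring
    have := hsq.add (tendsto_const_nhds (x := a))
    simpa using this
  -- continuity: E t → 1
  have hcast : Tendsto (fun t : ℝ => (t:ℂ)) (𝓝[>] (0:ℝ)) (𝓝 0) := by
    have := (Complex.continuous_ofReal.tendsto 0).mono_left (nhdsWithin_le_nhds (s := Set.Ioi (0:ℝ)))
    simpa using this
  have L1 : Tendsto E (𝓝[>] (0:ℝ)) (𝓝 1) := by
    have h1 : Tendsto (fun t : ℝ => (E t - 1) / (t:ℂ) * (t:ℂ) + 1) (𝓝[>] (0:ℝ))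
        (𝓝 (a * 0 + 1)) := (L2.mul hcast).add tendsto_const_nhds
    rw [mul_zero, zero_add] at h1
    apply h1.congr'
    filter_upwards [self_mem_nhdsWithin] with t ht
    have htne : (t:ℂ) ≠ 0 := by exact_mod_cast (ne_of_gt (by exact ht : (0:ℝ) < t))
    field_simp
    ring
  -- scaled limit
  have hcscale : Tendsto (fun t : ℝ => c * t) (𝓝[>] (0:ℝ)) (𝓝[>] (0:ℝ)) := by
    apply tendsto_nhdsWithin_of_tendsto_nhds_of_eventually_within
    · have : Tendsto (fun t : ℝ => c * t) (𝓝 (0:ℝ)) (𝓝 (c * 0)) :=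
        (continuous_const.mul continuous_id).tendsto 0
      simpa using this.mono_left nhdsWithin_le_nhds
    · filter_upwards [self_mem_nhdsWithin] with t ht
      exact mul_pos hcpos ht
  have L2c : Tendsto (fun t : ℝ => (E (c * t) - 1) / ((c * t : ℝ) : ℂ)) (𝓝[>] (0:ℝ)) (𝓝 a) :=
    L2.comp hcscale
  -- assemble
  have Lq : Tendsto (fun t : ℝ => (E t - 1) / (t:ℂ) * (E t + 1)
      - (c:ℂ) * ((E (c * t) - 1) / ((c * t : ℝ) : ℂ))) (𝓝[>] (0:ℝ)) (𝓝 (a * (1 + 1) - c * a)) :=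
    (L2.mul (L1.add tendsto_const_nhds)).sub (tendsto_const_nhds.mul L2c)
  have Lq0 : Tendsto (fun t : ℝ => (E t - 1) / (t:ℂ) * (E t + 1)
      - (c:ℂ) * ((E (c * t) - 1) / ((c * t : ℝ) : ℂ))) (𝓝[>] (0:ℝ)) (𝓝 0) := by
    apply Tendsto.congr' _ (tendsto_const_nhds (x := (0:ℂ)))
    filter_upwards [self_mem_nhdsWithin] with t ht
    have ht0 : (0:ℝ) < t := ht
    have htne : (t:ℂ) ≠ 0 := by exact_mod_cast ht0.ne'
    have hcne : (c:ℂ) ≠ 0 := by exact_mod_cast hcpos.ne'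
    have hfe' := hfe t ht0
    have hcalc : (E t - 1) / (t:ℂ) * (E t + 1) - (c:ℂ) * ((E (c*t) - 1) / ((c*t:ℝ):ℂ))
        = (E t * E t - E (c*t)) / (t:ℂ) := by
      push_cast
      field_simp
      ring
    rw [hcalc, hfe', sub_self, zero_div]
  have hkey : a * (1 + 1) - (c:ℂ) * a = 0 := tendsto_nhds_unique Lq Lq0
  have hc2 : (c:ℂ) = 2 := by
    have : a * ((1 + 1) - (c:ℂ)) = 0 := by ring_nf; linear_combination hkey
    rcases mul_eq_zero.mp this with h1 | h2
    · exact absurd h1 hane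
    · linear_combination -h2
  have hc2' : c = 2 := by exact_mod_cast hc2
  -- conclude α = 1
  have hlog : α * Real.log 2 = Real.log 2 := by
    have := congrArg Real.log hc2'
    rwa [Real.log_rpow two_pos] at this
  have hlog2 : Real.log 2 ≠ 0 := by
    have := Real.log_pos (by norm_num : (1:ℝ) < 2)
    linarith
  have hz : (α - 1) * Real.log 2 = 0 := by linarith
  rcases mul_eq_zero.mp hz with h' | h'
  · linarith
  · exact absurd h' hlog2
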